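/- Let X be a locally hypercompact T0 space. Then every irreducible closed subset of X is the closure of a directed subset of X; consequently, in X the irreducible closed sets, the closed well-filtered determined sets, the closed Rudin sets and the closures of directed sets all coincide. -/

import Mathlib

open Set

universe u

variable {α : Type u}

/-- The specialization order used in the paper: `x ≤ y` iff `x ∈ closure {y}`. -/
def specLE [TopologicalSpace α] (x y : α) : Prop := x ∈ closure ({y} : Set α)

/-- `↑x = {y | x ≤ y}` in the specialization order. -/
def upOf [TopologicalSpace α] (x : α) : Set α := {y | specLE x y}

/-- `↑F = {y | ∃ a ∈ F, a ≤ y}` in the specialization order. -/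
def upSetOf [TopologicalSpace α] (F : Set α) : Set α := {y | ∃ a ∈ F, specLE a y}

/-- `↓B = {x | ∃ b ∈ B, x ≤ b}` in the specialization order. -/
def downOf [TopologicalSpace α] (B : Set α) : Set α := {x | ∃ b ∈ B, specLE x b}

/-- A set directed with respect to the specialization order: nonempty, and any two
elements have an upper bound in it. -/
def SDirected [TopologicalSpace α] (D : Set α) : Prop :=
  D.Nonempty ∧ ∀ a ∈ D, ∀ b ∈ D, ∃ c ∈ D, specLE a c ∧ specLE b c

/-- `s` is a supremum (least upper bound) of `D` in the specialization order. -/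
def SIsSup [TopologicalSpace α] (D : Set α) (s : α) : Prop :=
  (∀ d ∈ D, specLE d s) ∧ ∀ t : α, (∀ d ∈ D, specLE d t) → specLE s t

/-- Upper set (= saturated set) in the specialization order. -/
def SUpper [TopologicalSpace α] (A : Set α) : Prop :=
  ∀ ⦃x y : α⦄, x ∈ A → specLE x y → y ∈ A

/-- Scott open set with respect to the specialization order. -/
def SScottOpen [TopologicalSpace α] (U : Set α) : Prop :=
  SUpper U ∧ ∀ D : Set α, SDirected D → ∀ s : α, SIsSup D s → s ∈ U → (D ∩ U).Nonempty

/-- A d-space: a dcpo under the specialization order, all open sets Scott open. -/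
def IsDSpace (α : Type u) [TopologicalSpace α] : Prop :=
  (∀ D : Set α, SDirected D → ∃ s : α, SIsSup D s) ∧
    ∀ U : Set α, IsOpen U → SScottOpen U

/-- Member of `K(X)`: nonempty, compact and saturated. -/
def IsKSet [TopologicalSpace α] (K : Set α) : Prop :=
  K.Nonempty ∧ IsCompact K ∧ SUpper K

/-- A filtered family of sets: nonempty, and any two members contain a common member. -/
def FilteredFam (𝒦 : Set (Set α)) : Prop :=
  𝒦.Nonempty ∧ ∀ K1 ∈ 𝒦, ∀ K2 ∈ 𝒦, ∃ K3 ∈ 𝒦, K3 ⊆ K1 ∩ K2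

/-- Well-filtered space: for every filtered family of nonempty compact saturated sets whose
intersection is contained in an open `U`, some member is contained in `U`. -/
def IsWellFiltered (α : Type u) [TopologicalSpace α] : Prop :=
  ∀ 𝒦 : Set (Set α), (∀ K ∈ 𝒦, IsKSet K) → FilteredFam 𝒦 →
    ∀ U : Set α, IsOpen U → ⋂₀ 𝒦 ⊆ U → ∃ K ∈ 𝒦, K ⊆ U

/-- Rudin set: a nonempty set `A` such that for some filtered family `𝒦 ⊆ K(X)`,
`closure A` is a minimal closed set meeting every member of `𝒦`. -/
def IsRudin [TopologicalSpace α] (A : Set α) : Prop :=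
  A.Nonempty ∧ ∃ 𝒦 : Set (Set α), (∀ K ∈ 𝒦, IsKSet K) ∧ FilteredFam 𝒦 ∧
    (∀ K ∈ 𝒦, (closure A ∩ K).Nonempty) ∧
    ∀ B : Set α, IsClosed B → B ⊆ closure A → (∀ K ∈ 𝒦, (B ∩ K).Nonempty) → B = closure A

/-- Well-filtered determined set: every continuous map into a well-filtered T0 space sends it
to a set whose closure is the closure of a unique point. -/
def IsWFD [TopologicalSpace α] (A : Set α) : Prop :=
  ∀ (Y : Type u) [TopologicalSpace Y] [T0Space Y], IsWellFiltered Y →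
    ∀ f : α → Y, Continuous f → ∃! y : Y, closure (f '' A) = closure ({y} : Set Y)

/-- Irreducible set. -/
def IsIrred [TopologicalSpace α] (A : Set α) : Prop :=
  A.Nonempty ∧ ∀ F1 F2 : Set α, IsClosed F1 → IsClosed F2 → A ⊆ F1 ∪ F2 → A ⊆ F1 ∨ A ⊆ F2

/-- Sober space: every irreducible closed set is the closure of a unique point. -/
def IsSober (α : Type u) [TopologicalSpace α] : Prop :=
  ∀ A : Set α, IsClosed A → IsIrred A → ∃! x : α, A = closure ({x} : Set α)

/-- `A` has a maximal element with respect to the specialization order. -/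
def HasMaxElem [TopologicalSpace α] (A : Set α) : Prop :=
  ∃ m ∈ A, ∀ a ∈ A, specLE m a → a = m

/-- Strong d-space. -/
def IsStrongDSpace (α : Type u) [TopologicalSpace α] : Prop :=
  ∀ D : Set α, SDirected D → ∀ x : α, ∀ U : Set α, IsOpen U →
    (⋂ d ∈ D, upOf d) ∩ upOf x ⊆ U → ∃ d ∈ D, upOf d ∩ upOf x ⊆ U

/-- Locally hypercompact space. -/
def LocallyHypercompact (α : Type u) [TopologicalSpace α] : Prop :=
  ∀ x : α, ∀ U : Set α, IsOpen U → x ∈ U →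
    ∃ F : Set α, F.Finite ∧ F.Nonempty ∧ x ∈ interior (upSetOf F) ∧ upSetOf F ⊆ U

section Aux
variable [TopologicalSpace α]

lemma specLE_refl (x : α) : specLE x x := subset_closure rfl

lemma specLE_trans {x y z : α} (h1 : specLE x y) (h2 : specLE y z) : specLE x z := by
  have : closure ({y} : Set α) ⊆ closure ({z} : Set α) :=
    closure_minimal (singleton_subset_iff.2 h2) isClosed_closure
  exact this h1

lemma isOpen_supper {U : Set α} (hU : IsOpen U) : SUpper U := by
  intro x y hx hxy
  by_contra hy
  have : ({y} : Set α) ⊆ Uᶜ := singleton_subset_iff.2 hy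
  have : closure ({y} : Set α) ⊆ Uᶜ := closure_minimal this (isClosed_compl_iff.2 hU)
  exact this hxy hx

lemma mem_closed_of_specLE {C : Set α} (hC : IsClosed C) {x y : α}
    (h : specLE x y) (hy : y ∈ C) : x ∈ C :=
  closure_minimal (singleton_subset_iff.2 hy) hC h

lemma specLE_map {β : Type*} [TopologicalSpace β] {f : α → β} (hf : Continuous f)
    {x y : α} (h : specLE x y) : specLE (f x) (f y) := by
  have : f x ∈ f '' closure {y} := ⟨x, h, rfl⟩
  have h2 := (image_closure_subset_closure_image hf) this
  simpa [image_singleton, specLE] using h2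

lemma supper_upOf (a : α) : SUpper (upOf a) := fun _ _ hx hxy => specLE_trans hx hxy

lemma supper_upSetOf (F : Set α) : SUpper (upSetOf F) := by
  rintro x y ⟨a, ha, hax⟩ hxy
  exact ⟨a, ha, specLE_trans hax hxy⟩

lemma isCompact_upOf (a : α) : IsCompact (upOf a) := by
  refine isCompact_of_finite_subcover fun {ι} U hU hcov => ?_
  obtain ⟨i, hi⟩ : ∃ i, a ∈ U i := by simpa using hcov (specLE_refl a)
  exact ⟨{i}, by simp; exact fun y hy => isOpen_supper (hU i) hi hy⟩

lemma isCompact_upSetOf {F : Set α} (hF : F.Finite) : IsCompact (upSetOf F) := by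
  have : upSetOf F = ⋃ a ∈ F, upOf a := by
    ext y; simp [upSetOf, upOf]
  rw [this]
  exact hF.isCompact_biUnion fun a _ => isCompact_upOf a

end Aux
section Rudin
variable [TopologicalSpace α]

/-- Order-theoretic Rudin lemma: a minimal down-closed subset of `A` meeting every member of a
Smyth-filtered family `𝒢` of nonempty finite subsets of `A` is directed. -/
lemma rudin_directed {A : Set α} (hdc : ∀ ⦃x y : α⦄, y ∈ A → specLE x y → x ∈ A)
    (𝒢 : Set (Set α)) (hne : 𝒢.Nonempty)
    (hG : ∀ G ∈ 𝒢, G.Finite ∧ G.Nonempty ∧ G ⊆ A)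
    (hfil : ∀ G1 ∈ 𝒢, ∀ G2 ∈ 𝒢, ∃ G3 ∈ 𝒢, upSetOf G3 ⊆ upSetOf G1 ∩ upSetOf G2) :
    ∃ E : Set α, E ⊆ A ∧ SDirected E ∧ ∀ G ∈ 𝒢, (E ∩ G).Nonempty := by
  set S : Set (Set α) :=
    {E | E ⊆ A ∧ (∀ ⦃x y : α⦄, y ∈ E → specLE x y → x ∈ E) ∧ ∀ G ∈ 𝒢, (E ∩ G).Nonempty}
  have hAS : A ∈ S := by
    refine ⟨Subset.rfl, hdc, fun G hGm => ?_⟩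
    obtain ⟨-, ⟨g, hg⟩, hGA⟩ := hG G hGm
    exact ⟨g, hGA hg, hg⟩
  have hchain : ∀ c ⊆ S, IsChain (· ⊆ ·) c → c.Nonempty → ∃ lb ∈ S, ∀ s ∈ c, lb ⊆ s := by
    intro c hcS hc hcne
    refine ⟨⋂₀ c, ⟨?_, ?_, ?_⟩, fun s hs => sInter_subset_of_mem hs⟩
    · obtain ⟨E, hE⟩ := hcne
      exact (sInter_subset_of_mem hE).trans (hcS hE).1
    · intro x y hy hxy E hE
      exact (hcS hE).2.1 (hy E hE) hxy
    · intro G hGm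
      obtain ⟨hGfin, -, -⟩ := hG G hGm
      -- pick a member of the chain minimizing the cardinality of `E ∩ G`
      have hcard : {n | ∃ E ∈ c, (E ∩ G).ncard = n}.Nonempty := by
        obtain ⟨E, hE⟩ := hcne; exact ⟨_, E, hE, rfl⟩
      obtain ⟨E0, hE0c, hE0⟩ := Nat.sInf_mem hcard
      have hmin : ∀ E ∈ c, E0 ∩ G ⊆ E ∩ G := by
        intro E hEc
        rcases hc.total hE0c hEc with h | h
        · exact inter_subset_inter_left _ h
        · have hsub : E ∩ G ⊆ E0 ∩ G := inter_subset_inter_left _ h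
          have h1 : (E0 ∩ G).ncard ≤ (E ∩ G).ncard := by
            rw [hE0]; exact Nat.sInf_le ⟨E, hEc, rfl⟩
          have := Set.eq_of_subset_of_ncard_le hsub h1 (hGfin.inter_of_right _)
          rw [this]
      obtain ⟨x, hxE0, hxG⟩ := (hcS hE0c).2.2 G hGm
      exact ⟨x, mem_sInter.2 fun E' hE' => (hmin E' hE' ⟨hxE0, hxG⟩).1, hxG⟩
  obtain ⟨E, -, hEmin⟩ := zorn_superset_nonempty S hchain A hAS
  have hES := hEmin.prop
  refine ⟨E, hES.1, ⟨?_, ?_⟩, hES.2.2⟩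
  · obtain ⟨G, hGm⟩ := hne
    obtain ⟨x, hx, -⟩ := hES.2.2 G hGm
    exact ⟨x, hx⟩
  · intro x hx y hy
    by_contra hub
    push_neg at hub
    -- the two "not above" pieces
    have hcover : ∀ e ∈ E, ¬ specLE x e ∨ ¬ specLE y e := by
      intro e he
      by_contra h
      push_neg at h
      exact hub e he h.1 h.2
    have hnotS : ∀ z ∈ E, ¬ ({e ∈ E | ¬ specLE z e} ∈ S) := by
      intro z hz hS
      have hEsub : E ⊆ {e ∈ E | ¬ specLE z e} := hEmin.2 hS (sep_subset _ _)
      exact (hEsub hz).2 (specLE_refl z)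
    have key : ∀ z ∈ E, ∃ G ∈ 𝒢, ∀ e ∈ E ∩ G, specLE z e := by
      intro z hz
      have hS := hnotS z hz
      have h1 : {e ∈ E | ¬ specLE z e} ⊆ A := fun e he => hES.1 he.1
      have h2 : ∀ ⦃a b : α⦄, b ∈ {e ∈ E | ¬ specLE z e} → specLE a b →
          a ∈ {e ∈ E | ¬ specLE z e} := by
        intro a b hb hab
        exact ⟨hES.2.1 hb.1 hab, fun hza => hb.2 (specLE_trans hza hab)⟩
      by_contra hcon
      push_neg at hcon
      apply hS
      refine ⟨h1, h2, fun G hGm => ?_⟩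
      obtain ⟨e, ⟨heE, heG⟩, hze⟩ := hcon G hGm
      exact ⟨e, ⟨heE, hze⟩, heG⟩
    obtain ⟨G1, hG1m, hG1⟩ := key x hx
    obtain ⟨G2, hG2m, hG2⟩ := key y hy
    obtain ⟨G3, hG3m, hG3⟩ := hfil G1 hG1m G2 hG2m
    obtain ⟨e, heE, heG3⟩ := hES.2.2 G3 hG3m
    have heup : e ∈ upSetOf G3 := ⟨e, heG3, specLE_refl e⟩
    obtain ⟨⟨a1, ha1, ha1e⟩, ⟨a2, ha2, ha2e⟩⟩ := hG3 heup
    have ha1E : a1 ∈ E := hES.2.1 heE ha1e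
    have ha2E : a2 ∈ E := hES.2.1 heE ha2e
    have hxe : specLE x e := specLE_trans (hG1 a1 ⟨ha1E, ha1⟩) ha1e
    have hye : specLE y e := specLE_trans (hG2 a2 ⟨ha2E, ha2⟩) ha2e
    exact hub e heE hxe hye

end Rudin
section DC
variable [TopologicalSpace α]

lemma irr_inter_opens {A U V : Set α} (hirr : IsIrred A) (hU : IsOpen U) (hV : IsOpen V)
    (hAU : (A ∩ U).Nonempty) (hAV : (A ∩ V).Nonempty) : (A ∩ (U ∩ V)).Nonempty := by
  by_contra h
  rw [not_nonempty_iff_eq_empty] at h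
  have hsub : A ⊆ Uᶜ ∪ Vᶜ := by
    intro a ha
    by_contra hc
    simp only [mem_union, mem_compl_iff, not_or, not_not] at hc
    exact (eq_empty_iff_forall_notMem.1 h a) ⟨ha, hc.1, hc.2⟩
  rcases hirr.2 Uᶜ Vᶜ (isClosed_compl_iff.2 hU) (isClosed_compl_iff.2 hV) hsub with h1 | h1
  · obtain ⟨a, ha, haU⟩ := hAU; exact h1 ha haU
  · obtain ⟨a, ha, haV⟩ := hAV; exact h1 ha haV

/-- The key lemma: in a locally hypercompact space every irreducible closed set is the
closure of a directed set. -/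
lemma dc_of_irred (hlc : LocallyHypercompact α) {A : Set α} (hA : IsClosed A)
    (hirr : IsIrred A) : ∃ D : Set α, SDirected D ∧ A = closure D := by
  set ℱ : Set (Set α) :=
    {F | F.Finite ∧ F.Nonempty ∧ (A ∩ interior (upSetOf F)).Nonempty}
  set ψ : Set α → Set α := fun F => {a ∈ F | ∃ x ∈ A, specLE a x}
  have hdc : ∀ ⦃x y : α⦄, y ∈ A → specLE x y → x ∈ A := fun x y hy hxy =>
    mem_closed_of_specLE hA hxy hy
  have hψA : ∀ F, ψ F ⊆ A := by
    rintro F a ⟨-, x, hx, hax⟩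
    exact hdc hx hax
  have hψne : ∀ F ∈ ℱ, (ψ F).Nonempty := by
    rintro F ⟨-, -, x, hxA, hxint⟩
    obtain ⟨a, haF, hax⟩ : x ∈ upSetOf F := interior_subset hxint
    exact ⟨a, haF, x, hxA, hax⟩
  have hFmem : ∀ x ∈ A, ∀ U : Set α, IsOpen U → x ∈ U →
      ∃ F ∈ ℱ, x ∈ interior (upSetOf F) ∧ upSetOf F ⊆ U := by
    intro x hxA U hU hxU
    obtain ⟨F, hFfin, hFne, hxint, hFU⟩ := hlc x U hU hxU
    exact ⟨F, ⟨hFfin, hFne, x, hxA, hxint⟩, hxint, hFU⟩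
  have hℱne : ℱ.Nonempty := by
    obtain ⟨x, hxA⟩ := hirr.1
    obtain ⟨F, hF, -⟩ := hFmem x hxA univ isOpen_univ (mem_univ x)
    exact ⟨F, hF⟩
  -- filteredness of ℱ via the ψ sets
  have hfil : ∀ F1 ∈ ℱ, ∀ F2 ∈ ℱ, ∃ F3 ∈ ℱ,
      upSetOf (ψ F3) ⊆ upSetOf (ψ F1) ∩ upSetOf (ψ F2) := by
    intro F1 hF1 F2 hF2
    have hint : (A ∩ (interior (upSetOf F1) ∩ interior (upSetOf F2))).Nonempty :=
      irr_inter_opens hirr isOpen_interior isOpen_interior hF1.2.2 hF2.2.2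
    obtain ⟨x, hxA, hxW⟩ := hint
    obtain ⟨F3, hF3fin, hF3ne, hxint, hF3W⟩ :=
      hlc x _ (isOpen_interior.inter isOpen_interior) hxW
    refine ⟨F3, ⟨hF3fin, hF3ne, x, hxA, hxint⟩, ?_⟩
    have step : ∀ (F : Set α), upSetOf F3 ⊆ interior (upSetOf F) →
        upSetOf (ψ F3) ⊆ upSetOf (ψ F) := by
      rintro F hsub y ⟨a, ⟨haF3, xA, hxA', haxA⟩, hay⟩
      have haup : a ∈ upSetOf F3 := ⟨a, haF3, specLE_refl a⟩
      obtain ⟨b, hbF, hba⟩ : a ∈ upSetOf F := interior_subset (hsub haup)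
      exact ⟨b, ⟨hbF, xA, hxA', specLE_trans hba haxA⟩, specLE_trans hba hay⟩
    exact subset_inter
      (step F1 (hF3W.trans (inter_subset_left)))
      (step F2 (hF3W.trans (inter_subset_right)))
  -- apply the Rudin lemma
  set 𝒢 : Set (Set α) := ψ '' ℱ
  have h𝒢 : ∀ G ∈ 𝒢, G.Finite ∧ G.Nonempty ∧ G ⊆ A := by
    rintro G ⟨F, hF, rfl⟩
    exact ⟨hF.1.subset (sep_subset _ _), hψne F hF, hψA F⟩
  have h𝒢fil : ∀ G1 ∈ 𝒢, ∀ G2 ∈ 𝒢, ∃ G3 ∈ 𝒢, upSetOf G3 ⊆ upSetOf G1 ∩ upSetOf G2 := by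
    rintro G1 ⟨F1, hF1, rfl⟩ G2 ⟨F2, hF2, rfl⟩
    obtain ⟨F3, hF3, hsub⟩ := hfil F1 hF1 F2 hF2
    exact ⟨ψ F3, ⟨F3, hF3, rfl⟩, hsub⟩
  obtain ⟨E, hEA, hEdir, hEmeets⟩ := rudin_directed hdc 𝒢
    (hℱne.image ψ) h𝒢 h𝒢fil
  refine ⟨E, hEdir, Subset.antisymm ?_ (closure_minimal hEA hA)⟩
  intro x hxA
  rw [mem_closure_iff]
  intro V hV hxV
  obtain ⟨F, hF, -, hFV⟩ := hFmem x hxA V hV hxV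
  obtain ⟨e, heE, heψ⟩ := hEmeets (ψ F) ⟨F, hF, rfl⟩
  exact ⟨e, hFV ⟨e, heψ.1, specLE_refl e⟩, heE⟩

end DC
section WF

/-- In a well-filtered space, the closure of a directed set is a point closure. -/
lemma wf_closure_directed {Y : Type u} [TopologicalSpace Y] (hwf : IsWellFiltered Y)
    {D : Set Y} (hD : SDirected D) : ∃ s : Y, closure D = closure ({s} : Set Y) := by
  set 𝒦 : Set (Set Y) := upOf '' D
  have hK : ∀ K ∈ 𝒦, IsKSet K := by
    rintro K ⟨d, hd, rfl⟩
    exact ⟨⟨d, specLE_refl d⟩, isCompact_upOf d, supper_upOf d⟩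
  have hfil : FilteredFam 𝒦 := by
    refine ⟨hD.1.image _, ?_⟩
    rintro K1 ⟨d1, hd1, rfl⟩ K2 ⟨d2, hd2, rfl⟩
    obtain ⟨c, hc, h1, h2⟩ := hD.2 d1 hd1 d2 hd2
    exact ⟨upOf c, ⟨c, hc, rfl⟩, fun z hz =>
      ⟨specLE_trans h1 hz, specLE_trans h2 hz⟩⟩
  have hmeet : ∃ s, s ∈ closure D ∧ s ∈ ⋂₀ 𝒦 := by
    by_contra h
    push_neg at h
    have hsub : ⋂₀ 𝒦 ⊆ (closure D)ᶜ := fun s hs hscl => h s hscl hs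
    obtain ⟨K, ⟨d, hd, rfl⟩, hKU⟩ :=
      hwf 𝒦 hK hfil _ isClosed_closure.isOpen_compl hsub
    exact hKU (specLE_refl d) (subset_closure hd)
  obtain ⟨s, hscl, hsub⟩ := hmeet
  refine ⟨s, Subset.antisymm ?_ (closure_minimal (singleton_subset_iff.2 hscl) isClosed_closure)⟩
  apply closure_minimal _ isClosed_closure
  intro d hd
  have : specLE d s := hsub (upOf d) ⟨d, hd, rfl⟩
  exact this

/-- Every finite space is well-filtered. -/
lemma finite_isWellFiltered {Y : Type u} [TopologicalSpace Y] [Finite Y] :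
    IsWellFiltered Y := by
  intro 𝒦 _ hfil U _ hU
  have hfin : 𝒦.Finite := Set.toFinite 𝒦
  obtain ⟨K0, hK0, hK0min⟩ := hfin.exists_minimalFor id 𝒦 hfil.1
  have hK0sub : ∀ K ∈ 𝒦, K0 ⊆ K := by
    intro K hK
    obtain ⟨K3, hK3, hK3sub⟩ := hfil.2 K0 hK0 K hK
    have : K3 = K0 := Subset.antisymm (hK3sub.trans inter_subset_left) (hK0min hK3 (hK3sub.trans inter_subset_left))
    exact this ▸ hK3sub.trans inter_subset_right
  exact ⟨K0, hK0, (fun y hy => hU (mem_sInter.2 fun K hK => hK0sub K hK hy))⟩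

end WF
section Sierpinski

lemma isOpen_setOf_self : IsOpen {p : Prop | p} := by
  convert isOpen_singleton_true using 1
  ext p; simp [eq_iff_iff]

lemma prop_specLE_imp {p q : Prop} (h : specLE p q) : p → q := by
  intro hp
  by_contra hq
  have hcl : IsClosed {r : Prop | ¬ r} := by
    simpa [Set.compl_setOf] using isOpen_setOf_self.isClosed_compl
  have hsub : closure ({q} : Set Prop) ⊆ {r | ¬ r} :=
    closure_minimal (by simpa using hq) hcl
  exact hsub h hp

/-- A closed WFD set is irreducible. -/
lemma irred_of_wfd {α : Type u} [TopologicalSpace α] {A : Set α} (_hA : IsClosed A)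
    (hwfd : IsWFD A) : IsIrred A := by
  classical
  set Y : Type u := ULift.{u} Prop × ULift.{u} Prop
  have hwfY : IsWellFiltered Y := finite_isWellFiltered
  -- nonemptiness
  have hne : A.Nonempty := by
    by_contra h
    rw [not_nonempty_iff_eq_empty] at h
    obtain ⟨y, hy, -⟩ := hwfd Y hwfY (fun _ => (⟨True⟩, ⟨True⟩)) continuous_const
    have : y ∈ closure ({y} : Set Y) := subset_closure rfl
    rw [← hy] at this
    simp [h] at this
  refine ⟨hne, fun F1 F2 hF1 hF2 hsub => ?_⟩
  by_contra hcon
  push_neg at hcon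
  obtain ⟨hn1, hn2⟩ := hcon
  obtain ⟨a1, ha1A, ha1F⟩ := not_subset.1 hn1
  obtain ⟨a2, ha2A, ha2F⟩ := not_subset.1 hn2
  set f : α → Y := fun x => (⟨x ∈ F1ᶜ⟩, ⟨x ∈ F2ᶜ⟩)
  have hf : Continuous f := by
    refine Continuous.prodMk (continuous_uliftUp.comp ?_) (continuous_uliftUp.comp ?_)
    · exact continuous_Prop.2 hF1.isOpen_compl
    · exact continuous_Prop.2 hF2.isOpen_compl
  obtain ⟨y, hy, -⟩ := hwfd Y hwfY f hf
  -- the two coordinates of y are true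
  have hspec : ∀ a ∈ A, specLE (f a) y := by
    intro a ha
    have : f a ∈ closure (f '' A) := subset_closure ⟨a, ha, rfl⟩
    rwa [hy] at this
  have hy1 : y.1.down := by
    have h1 := specLE_map (continuous_uliftDown.comp continuous_fst) (hspec a1 ha1A)
    exact prop_specLE_imp h1 ha1F
  have hy2 : y.2.down := by
    have h2 := specLE_map (continuous_uliftDown.comp continuous_snd) (hspec a2 ha2A)
    exact prop_specLE_imp h2 ha2F
  -- the open quadrant around y must meet f '' A
  have hU : IsOpen {z : Y | z.1.down ∧ z.2.down} := by
    have : {z : Y | z.1.down ∧ z.2.down} =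
        (fun z : Y => z.1.down) ⁻¹' {p | p} ∩ (fun z : Y => z.2.down) ⁻¹' {p | p} := rfl
    rw [this]
    exact ((isOpen_setOf_self.preimage (continuous_uliftDown.comp continuous_fst)).inter
      (isOpen_setOf_self.preimage (continuous_uliftDown.comp continuous_snd)))
  have hymem : y ∈ closure (f '' A) := by
    rw [hy]; exact subset_closure rfl
  rw [mem_closure_iff] at hymem
  obtain ⟨z, hz, a, haA, rfl⟩ := hymem _ hU ⟨hy1, hy2⟩
  rcases hsub haA with h | h
  · exact hz.1 h
  · exact hz.2 h

end Sierpinski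
section Rest
variable [TopologicalSpace α]

/-- The closure of a directed set is irreducible and closed. -/
lemma irred_closure_of_directed {D : Set α} (hD : SDirected D) : IsIrred (closure D) := by
  refine ⟨hD.1.closure, fun F1 F2 hF1 hF2 hsub => ?_⟩
  have hDsub : D ⊆ F1 ∪ F2 := (subset_closure.trans hsub)
  have : D ⊆ F1 ∨ D ⊆ F2 := by
    by_contra h
    push_neg at h
    obtain ⟨d1, hd1D, hd1⟩ := not_subset.1 h.1
    obtain ⟨d2, hd2D, hd2⟩ := not_subset.1 h.2
    obtain ⟨c, hc, h1, h2⟩ := hD.2 d1 hd1D d2 hd2D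
    rcases hDsub hc with hcF | hcF
    · exact hd1 (mem_closed_of_specLE hF1 h1 hcF)
    · exact hd2 (mem_closed_of_specLE hF2 h2 hcF)
  rcases this with h | h
  · exact Or.inl (closure_minimal h hF1)
  · exact Or.inr (closure_minimal h hF2)

/-- A closed Rudin set is irreducible. -/
lemma irred_of_rudin {A : Set α} (hA : IsClosed A) (hr : IsRudin A) : IsIrred A := by
  obtain ⟨hne, 𝒦, hK, hfil, hmeets, hmin⟩ := hr
  have hclA : closure A = A := hA.closure_eq
  refine ⟨hne, fun F1 F2 hF1 hF2 hsub => ?_⟩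
  by_contra h
  push_neg at h
  have hB : ∀ (F : Set α), IsClosed F → ¬ A ⊆ F → ∃ K ∈ 𝒦, ¬ (A ∩ F ∩ K).Nonempty := by
    intro F hF hAF
    by_contra hc
    push_neg at hc
    have heq : A ∩ F = closure A :=
      hmin (A ∩ F) (hA.inter hF) (hclA.symm ▸ inter_subset_left)
        fun K hKm => hc K hKm
    rw [hclA] at heq
    exact hAF fun a ha => (heq.superset ha).2
  obtain ⟨K1, hK1m, hK1⟩ := hB F1 hF1 h.1
  obtain ⟨K2, hK2m, hK2⟩ := hB F2 hF2 h.2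
  obtain ⟨K3, hK3m, hK3sub⟩ := hfil.2 K1 hK1m K2 hK2m
  obtain ⟨x, hxA, hxK3⟩ := hmeets K3 hK3m
  rw [hclA] at hxA
  rcases hsub hxA with hx | hx
  · exact hK1 ⟨x, ⟨hxA, hx⟩, (hK3sub hxK3).1⟩
  · exact hK2 ⟨x, ⟨hxA, hx⟩, (hK3sub hxK3).2⟩

/-- An irreducible closed set in a locally hypercompact space is a Rudin set. -/
lemma rudin_of_irred (hlc : LocallyHypercompact α) {A : Set α} (hA : IsClosed A)
    (hirr : IsIrred A) : IsRudin A := by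
  have hclA : closure A = A := hA.closure_eq
  set ℱ : Set (Set α) :=
    {F | F.Finite ∧ F.Nonempty ∧ (A ∩ interior (upSetOf F)).Nonempty}
  set 𝒦 : Set (Set α) := upSetOf '' ℱ
  have hFmem : ∀ x ∈ A, ∀ U : Set α, IsOpen U → x ∈ U →
      ∃ F ∈ ℱ, x ∈ interior (upSetOf F) ∧ upSetOf F ⊆ U := by
    intro x hxA U hU hxU
    obtain ⟨F, hFfin, hFne, hxint, hFU⟩ := hlc x U hU hxU
    exact ⟨F, ⟨hFfin, hFne, x, hxA, hxint⟩, hxint, hFU⟩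
  have hℱne : ℱ.Nonempty := by
    obtain ⟨x, hxA⟩ := hirr.1
    obtain ⟨F, hF, -⟩ := hFmem x hxA univ isOpen_univ (mem_univ x)
    exact ⟨F, hF⟩
  refine ⟨hirr.1, 𝒦, ?_, ⟨hℱne.image _, ?_⟩, ?_, ?_⟩
  · rintro K ⟨F, ⟨hFfin, ⟨a, ha⟩, -⟩, rfl⟩
    exact ⟨⟨a, a, ha, specLE_refl a⟩, isCompact_upSetOf hFfin, supper_upSetOf F⟩
  · rintro K1 ⟨F1, hF1, rfl⟩ K2 ⟨F2, hF2, rfl⟩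
    obtain ⟨x, hxA, hxW⟩ := irr_inter_opens hirr isOpen_interior isOpen_interior
      hF1.2.2 hF2.2.2
    obtain ⟨F3, hF3fin, hF3ne, hxint, hF3W⟩ :=
      hlc x _ (isOpen_interior.inter isOpen_interior) hxW
    exact ⟨upSetOf F3, ⟨F3, ⟨hF3fin, hF3ne, x, hxA, hxint⟩, rfl⟩,
      hF3W.trans (inter_subset_inter interior_subset interior_subset)⟩
  · rintro K ⟨F, ⟨-, -, x, hxA, hxint⟩, rfl⟩
    exact ⟨x, hclA.symm ▸ hxA, interior_subset hxint⟩
  · rintro B hB hBA hBmeets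
    rw [hclA] at hBA ⊢
    refine Subset.antisymm hBA fun x hxA => ?_
    by_contra hxB
    obtain ⟨F, hF, -, hFsub⟩ := hFmem x hxA Bᶜ hB.isOpen_compl hxB
    obtain ⟨b, hbB, hbF⟩ := hBmeets (upSetOf F) ⟨F, hF, rfl⟩
    exact hFsub hbF hbB

end Rest
section Final
variable [TopologicalSpace α]

lemma wfd_of_irred (hlc : LocallyHypercompact α) {A : Set α} (hA : IsClosed A)
    (hirr : IsIrred A) : IsWFD A := by
  obtain ⟨D, hD, hAD⟩ := dc_of_irred hlc hA hirr
  intro Y _ _ hwf f hf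
  have hfD : SDirected (f '' D) := by
    refine ⟨hD.1.image f, ?_⟩
    rintro - ⟨a, ha, rfl⟩ - ⟨b, hb, rfl⟩
    obtain ⟨c, hc, h1, h2⟩ := hD.2 a ha b hb
    exact ⟨f c, ⟨c, hc, rfl⟩, specLE_map hf h1, specLE_map hf h2⟩
  obtain ⟨s, hs⟩ := wf_closure_directed hwf hfD
  have hDA : D ⊆ A := hAD ▸ subset_closure
  have himg : closure (f '' A) = closure (f '' D) := by
    refine Subset.antisymm ?_ (closure_mono (image_mono hDA))
    refine closure_minimal ?_ isClosed_closure
    rw [hAD]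
    exact (image_closure_subset_closure_image hf).trans
      (closure_mono (Subset.rfl)) 
  refine ⟨s, himg.trans hs, fun y hy => ?_⟩
  have heq : closure ({y} : Set Y) = closure ({s} : Set Y) := by
    rw [← hy, himg, hs]
  exact (inseparable_iff_closure_eq.2 heq).eq

end Final
/-- in a locally hypercompact T0 space, every irreducible closed set is the
closure of a directed set, and irreducible closed sets, closed well-filtered determined sets,
closed Rudin sets and closures of directed sets coincide. -/
theorem stmt_7 (α : Type u) [TopologicalSpace α] [T0Space α]
    (hlc : LocallyHypercompact α) :
    (∀ A : Set α, IsClosed A → IsIrred A → ∃ D : Set α, SDirected D ∧ A = closure D) ∧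
    {A : Set α | IsClosed A ∧ IsIrred A} = {A : Set α | IsClosed A ∧ IsWFD A} ∧
    {A : Set α | IsClosed A ∧ IsIrred A} = {A : Set α | IsClosed A ∧ IsRudin A} ∧
    {A : Set α | IsClosed A ∧ IsIrred A} =
      {A : Set α | ∃ D : Set α, SDirected D ∧ A = closure D} := by
  refine ⟨fun A hA hirr => dc_of_irred hlc hA hirr, ?_, ?_, ?_⟩
  · ext A
    exact ⟨fun ⟨hA, hirr⟩ => ⟨hA, wfd_of_irred hlc hA hirr⟩,
      fun ⟨hA, hwfd⟩ => ⟨hA, irred_of_wfd hA hwfd⟩⟩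
  · ext A
    exact ⟨fun ⟨hA, hirr⟩ => ⟨hA, rudin_of_irred hlc hA hirr⟩,
      fun ⟨hA, hr⟩ => ⟨hA, irred_of_rudin hA hr⟩⟩
  · ext A
    constructor
    · rintro ⟨hA, hirr⟩
      exact dc_of_irred hlc hA hirr
    · rintro ⟨D, hD, rfl⟩
      exact ⟨isClosed_closure, irred_closure_of_directed hD⟩
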